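/- arXiv:1204.2730 — 12 statements merged into one kernel-verified Lean document; each statement's English description precedes it below -/
import Mathlib

section
/- Let k, ℓ, D be integers with 2 ≤ k ≤ ℓ ≤ D, D ≥ 3, and (k, ℓ) ≠ (2, 2). If ⌊D/k⌋ + ⌊D/ℓ⌋ ≥ D − 2, then one of the following holds: (k, ℓ) = (2, 3) and D ≤ 12; (k, ℓ) = (2, 4) and D ≤ 8; (k, ℓ) = (2, 5) and D ≤ 6; (k, ℓ) = (2, 6) and D ≤ 6; (k, ℓ) = (3, 3) and D ≤ 6; (k, ℓ) = (3, 4) and D ≤ 4; (k, ℓ) = (4, 4) and D ≤ 4. -/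
/-- Step-1 Diophantine analysis (case m = 2): for integers `2 ≤ k ≤ ℓ ≤ D`, `D ≥ 3`,
`(k, ℓ) ≠ (2, 2)`, if `⌊D/k⌋ + ⌊D/ℓ⌋ ≥ D - 2` then `(k, ℓ)` and the bound on `D`
are among the seven listed possibilities.  Since `k, ℓ, D > 0`, integer division
on `ℤ` is the floor of the rational quotient. -/
theorem restricted_pairs_and_degree_bounds (k l D : ℤ) (hk : 2 ≤ k) (hkl : k ≤ l)
    (hlD : l ≤ D) (hD : 3 ≤ D) (hne : ¬(k = 2 ∧ l = 2))
    (h : D / k + D / l ≥ D - 2) :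
    (k = 2 ∧ l = 3 ∧ D ≤ 12) ∨
    (k = 2 ∧ l = 4 ∧ D ≤ 8) ∨
    (k = 2 ∧ l = 5 ∧ D ≤ 6) ∨
    (k = 2 ∧ l = 6 ∧ D ≤ 6) ∨
    (k = 3 ∧ l = 3 ∧ D ≤ 6) ∨
    (k = 3 ∧ l = 4 ∧ D ≤ 4) ∨
    (k = 4 ∧ l = 4 ∧ D ≤ 4) := by
  have hk0 : (0:ℤ) < k := by linarith
  have hl0 : (0:ℤ) < l := by linarith
  have hq1 : D / k * k ≤ D := Int.ediv_mul_le D (by linarith)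
  have hq2 : D / l * l ≤ D := Int.ediv_mul_le D (by linarith)
  have key : ((k - 1) * (l - 1) - 1) * D ≤ 2 * k * l := by
    nlinarith [mul_le_mul_of_nonneg_left hq1 hl0.le,
      mul_le_mul_of_nonneg_left hq2 hk0.le,
      mul_le_mul_of_nonneg_left h (mul_pos hk0 hl0).le,
      mul_pos hk0 hl0]
  have hl6 : l ≤ 6 := by
    by_contra hc
    push_neg at hc
    have h1 : ((k - 1) * (l - 1) - 1) * l ≤ ((k - 1) * (l - 1) - 1) * D :=
      mul_le_mul_of_nonneg_left hlD (by nlinarith)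
    nlinarith [h1, key, mul_nonneg (mul_nonneg (by linarith : (0:ℤ) ≤ k - 2)
      (by linarith : (0:ℤ) ≤ l - 7)) hl0.le]
  have hk4 : k ≤ 4 := by
    by_contra hc
    push_neg at hc
    have h1 : ((k - 1) * (l - 1) - 1) * l ≤ ((k - 1) * (l - 1) - 1) * D :=
      mul_le_mul_of_nonneg_left hlD (by nlinarith)
    nlinarith [h1, key, mul_nonneg (mul_nonneg (by linarith : (0:ℤ) ≤ k - 5)
      (by linarith : (0:ℤ) ≤ l - 5)) hl0.le]
  interval_cases k <;> interval_cases l <;> omega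
end

section
/- Let p, q ∈ ℂ[X] be coprime polynomials with deg p = D ≥ 1 and deg q < D, so that φ = p/q defines a rational map of degree D of the Riemann sphere with φ(∞) = ∞. If every complex root of the Wronskian p′q − pq′ is a root of the product p·(p − q)·q, then R(p) + R(p − q) + R(q) + 1 = D + 2. -/
open Polynomial

/-- The number of distinct complex roots of a polynomial. -/
noncomputable def numDistinctRoots (f : ℂ[X]) : ℕ := f.roots.toFinset.card


/-- Key lemma: if `z` is a root of `f` of multiplicity `m` and `g z ≠ 0`, then
the Wronskian `f'g − fg'` is nonzero with root multiplicity `m − 1` at `z`. -/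
lemma wronskian_mult (f g : ℂ[X]) (hf : f ≠ 0) (z : ℂ)
    (hz : f.IsRoot z) (hgz : ¬ g.IsRoot z) :
    derivative f * g - f * derivative g ≠ 0 ∧
    rootMultiplicity z (derivative f * g - f * derivative g)
      = rootMultiplicity z f - 1 := by
  set m := rootMultiplicity z f with hm
  have hm1 : 1 ≤ m := (rootMultiplicity_pos hf).mpr hz
  set t : ℂ[X] := X - C z with ht
  set u : ℂ[X] := f /ₘ t ^ m with hu
  have hfu : t ^ m * u = f := pow_mul_divByMonic_rootMultiplicity_eq f z
  have huz : u.eval z ≠ 0 := eval_divByMonic_pow_rootMultiplicity_ne_zero z hf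
  set V : ℂ[X] := C (m : ℂ) * u * g + t * (derivative u * g - u * derivative g) with hV
  have hVz : V.eval z ≠ 0 := by
    simp only [hV, eval_add, eval_mul, eval_sub, eval_C, ht, eval_X]
    simpa using mul_ne_zero (mul_ne_zero (Nat.cast_ne_zero.mpr (by omega)) huz) hgz
  have hfact : derivative f * g - f * derivative g = t ^ (m - 1) * V := by
    have hpow : t ^ m = t ^ (m - 1) * t := by
      rw [← pow_succ]; congr 1; omega
    have hdf : derivative f = C (m : ℂ) * t ^ (m - 1) * u + t ^ m * derivative u := by
      rw [← hfu, derivative_mul, derivative_pow]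
      simp [ht]
    rw [hdf, ← hfu, hV, hpow]; ring
  have hV0 : V ≠ 0 := fun h => hVz (by simp [h])
  have ht0 : t ^ (m - 1) ≠ 0 := pow_ne_zero _ (X_sub_C_ne_zero z)
  refine ⟨by rw [hfact]; exact mul_ne_zero ht0 hV0, ?_⟩
  rw [hfact, rootMultiplicity_mul (mul_ne_zero ht0 hV0), ht,
    rootMultiplicity_X_sub_C_pow, rootMultiplicity_eq_zero hVz, add_zero]

lemma rm_neg (f : ℂ[X]) (z : ℂ) : rootMultiplicity z (-f) = rootMultiplicity z f := by
  rw [← count_roots, roots_neg, count_roots]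

lemma natDegree_eq_sum_rm (f : ℂ[X]) (hf : f ≠ 0) {T : Finset ℂ}
    (hT : f.roots.toFinset ⊆ T) :
    f.natDegree = ∑ z ∈ T, rootMultiplicity z f := by
  have hsplit : f.Splits := IsAlgClosed.splits f
  rw [hsplit.natDegree_eq_card_roots]
  rw [← Multiset.toFinset_sum_count_eq f.roots]
  rw [Finset.sum_subset hT]
  · exact Finset.sum_congr rfl fun z _ => count_roots f
  · intro z _ hz
    rw [Multiset.mem_toFinset] at hz
    exact Multiset.count_eq_zero_of_notMem hz

/-- Lemma 2.2(a), first half: if the rational map `φ = p/q` (of degree `D`, with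
`φ(∞) = ∞`) has all its (finite) branch points — i.e. the roots of the Wronskian
`p′q − pq′` — above `{0, 1, ∞}`, then there are exactly `D + 2` distinct points
above `{0, 1, ∞}`, namely the roots of `p`, of `p − q`, of `q`, and the point `∞`. -/
theorem belyi_fiber_count (p q : ℂ[X]) (D : ℕ) (hD : 1 ≤ D)
    (hp : p.natDegree = D) (hq : q.natDegree < D) (hcop : IsCoprime p q)
    (hbr : ∀ z : ℂ, (derivative p * q - p * derivative q).IsRoot z →
      (p * (p - q) * q).IsRoot z) :
    numDistinctRoots p + numDistinctRoots (p - q) + numDistinctRoots q + 1 = D + 2 := by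
  have hp0 : p ≠ 0 := fun h => by rw [h, natDegree_zero] at hp; omega
  have hq0 : q ≠ 0 := by
    rintro rfl
    rw [isCoprime_zero_right] at hcop
    have := natDegree_eq_zero_of_isUnit hcop
    omega
  set e := q.natDegree with he
  have hdpq : (p - q).natDegree = D := by
    rw [natDegree_sub_eq_left_of_natDegree_lt (by rw [hp]; exact hq)]; exact hp
  have hpq0 : p - q ≠ 0 := fun h => by rw [h, natDegree_zero] at hdpq; omega
  -- no common roots
  have hnc : ∀ z : ℂ, p.IsRoot z → q.IsRoot z → False := by
    intro z h1 h2
    obtain ⟨a, b, hab⟩ := hcop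
    have h3 := congrArg (eval z) hab
    simp only [eval_add, eval_mul, eval_one, show eval z p = 0 from h1,
      show eval z q = 0 from h2, mul_zero, add_zero] at h3
    exact one_ne_zero h3.symm
  set W := derivative p * q - p * derivative q with hWdef
  -- W ≠ 0
  have hW0 : W ≠ 0 := by
    have hdegp : 0 < p.degree := natDegree_pos_iff_degree_pos.mp (by omega)
    obtain ⟨z0, hz0⟩ := Complex.exists_root hdegp
    exact (wronskian_mult p q hp0 z0 hz0 (fun h => hnc z0 hz0 h)).1
  -- degree of W
  have ha : p.coeff D ≠ 0 := by rw [← hp]; exact leadingCoeff_ne_zero.mpr hp0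
  have hb : q.coeff e ≠ 0 := leadingCoeff_ne_zero.mpr hq0
  have hcoeffp' : p.derivative.coeff (D - 1) = p.coeff D * D := by
    have h1 : D - 1 + 1 = D := by omega
    rw [coeff_derivative, h1, Nat.cast_sub (by omega : 1 ≤ D)]
    push_cast; ring
  have hp'0 : p.derivative ≠ 0 := fun h => by
    rw [h, coeff_zero] at hcoeffp'
    exact mul_ne_zero ha (Nat.cast_ne_zero.mpr (by omega)) hcoeffp'.symm
  have hdp' : p.derivative.natDegree = D - 1 := by
    refine le_antisymm (by simpa [hp] using natDegree_derivative_le p) ?_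
    exact le_natDegree_of_ne_zero (by
      rw [hcoeffp']; exact mul_ne_zero ha (Nat.cast_ne_zero.mpr (by omega)))
  have hWdeg : W.natDegree = D + e - 1 := by
    rcases Nat.eq_zero_or_pos e with he0 | he1
    · -- q is a nonzero constant
      have hq'deg : q.natDegree = 0 := by omega
      have hq' : derivative q = 0 := by
        obtain ⟨c, hc⟩ := natDegree_eq_zero.mp hq'deg
        rw [← hc]; exact derivative_C
      rw [hWdef, hq', mul_zero, sub_zero, natDegree_mul hp'0 hq0, hdp']
      omega
    · have hcoeffq' : q.derivative.coeff (e - 1) = q.coeff e * e := by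
        have h1 : e - 1 + 1 = e := by omega
        rw [coeff_derivative, h1, Nat.cast_sub (by omega : 1 ≤ e)]
        push_cast; ring
      have hq'0 : q.derivative ≠ 0 := fun h => by
        rw [h, coeff_zero] at hcoeffq'
        exact mul_ne_zero hb (Nat.cast_ne_zero.mpr (by omega)) hcoeffq'.symm
      have hdq' : q.derivative.natDegree = e - 1 := by
        refine le_antisymm (natDegree_derivative_le q) ?_
        exact le_natDegree_of_ne_zero (by
          rw [hcoeffq']; exact mul_ne_zero hb (Nat.cast_ne_zero.mpr (by omega)))
      have hc1 : (derivative p * q).coeff (D + e - 1) = p.coeff D * D * q.coeff e := by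
        have := coeff_mul_degree_add_degree p.derivative q
        rw [hdp', ← he, show D - 1 + e = D + e - 1 by omega] at this
        rw [this, leadingCoeff, leadingCoeff, hdp', hcoeffp', ← he]
      have hc2 : (p * derivative q).coeff (D + e - 1) = p.coeff D * (q.coeff e * e) := by
        have := coeff_mul_degree_add_degree p q.derivative
        rw [hp, hdq', show D + (e - 1) = D + e - 1 by omega] at this
        rw [this, leadingCoeff, leadingCoeff, hdq', hcoeffq', hp]
      have hWc : W.coeff (D + e - 1) ≠ 0 := by
        rw [hWdef, coeff_sub, hc1, hc2]
        have : p.coeff D * D * q.coeff e - p.coeff D * (q.coeff e * e)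
            = p.coeff D * q.coeff e * ((D : ℂ) - e) := by ring
        rw [this]
        refine mul_ne_zero (mul_ne_zero ha hb) (sub_ne_zero.mpr ?_)
        exact_mod_cast fun h => absurd h (by omega : ¬ D = e)
      refine le_antisymm ?_ (le_natDegree_of_ne_zero hWc)
      refine (natDegree_sub_le _ _).trans ?_
      have l1 : (derivative p * q).natDegree ≤ D + e - 1 := by
        rw [natDegree_mul hp'0 hq0, hdp', ← he]; omega
      have l2 : (p * derivative q).natDegree ≤ D + e - 1 := by
        rw [natDegree_mul hp0 hq'0, hp, hdq']; omega
      omega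
  -- the fiber set
  set P := p * (p - q) * q with hPdef
  have hP0 : P ≠ 0 := mul_ne_zero (mul_ne_zero hp0 hpq0) hq0
  set S := P.roots.toFinset with hS
  have hWsub : W.roots.toFinset ⊆ S := by
    intro z hz
    rw [Multiset.mem_toFinset, mem_roots hW0] at hz
    rw [hS, Multiset.mem_toFinset, mem_roots hP0]
    exact hbr z hz
  -- termwise multiplicity relation
  have hkey : ∀ z ∈ S, rootMultiplicity z P = rootMultiplicity z W + 1 := by
    intro z hzS
    have hzP : P.IsRoot z := (mem_roots hP0).mp (Multiset.mem_toFinset.mp hzS)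
    have hmulP : rootMultiplicity z P
        = rootMultiplicity z p + rootMultiplicity z (p - q) + rootMultiplicity z q := by
      rw [hPdef, rootMultiplicity_mul hP0,
        rootMultiplicity_mul (mul_ne_zero hp0 hpq0)]
    have hsplit : eval z p = 0 ∨ eval z (p - q) = 0 ∨ eval z q = 0 := by
      have : eval z p * eval z (p - q) * eval z q = 0 := by
        simpa [hPdef, eval_mul] using hzP
      rcases mul_eq_zero.mp this with h | h
      · rcases mul_eq_zero.mp h with h | h
        · exact Or.inl h
        · exact Or.inr (Or.inl h)
      · exact Or.inr (Or.inr h)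
    rcases hsplit with hzp | hzpq | hzq
    · have hqz : eval z q ≠ 0 := fun h => hnc z hzp h
      have hpqz : eval z (p - q) ≠ 0 := by
        rw [eval_sub, hzp, zero_sub]; exact neg_ne_zero.mpr hqz
      have hm := (wronskian_mult p q hp0 z hzp hqz).2
      have hpos : 1 ≤ rootMultiplicity z p := (rootMultiplicity_pos hp0).mpr hzp
      rw [hmulP, rootMultiplicity_eq_zero hpqz, rootMultiplicity_eq_zero hqz, ← hWdef] at *
      omega
    · have hqz : eval z q ≠ 0 := by
        intro h
        exact hnc z (by rw [IsRoot, show p = (p - q) + q by ring, eval_add, hzpq, h, add_zero]) h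
      have hpz : eval z p ≠ 0 := by
        rw [show p = (p - q) + q by ring, eval_add, hzpq, zero_add]; exact hqz
      have hWalt : W = derivative (p - q) * q - (p - q) * derivative q := by
        rw [hWdef, derivative_sub]; ring
      have hm := (wronskian_mult (p - q) q hpq0 z hzpq hqz).2
      rw [← hWalt] at hm
      have hpos : 1 ≤ rootMultiplicity z (p - q) := (rootMultiplicity_pos hpq0).mpr hzpq
      rw [hmulP, rootMultiplicity_eq_zero hpz, rootMultiplicity_eq_zero hqz]
      omega
    · have hpz : eval z p ≠ 0 := fun h => hnc z h hzq
      have hpqz : eval z (p - q) ≠ 0 := by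
        rw [eval_sub, hzq, sub_zero]; exact hpz
      have hWalt : W = -(derivative q * p - q * derivative p) := by rw [hWdef]; ring
      have hm := (wronskian_mult q p hq0 z hzq hpz).2
      have hm' : rootMultiplicity z W = rootMultiplicity z q - 1 := by
        rw [hWalt, rm_neg]; exact hm
      have hpos : 1 ≤ rootMultiplicity z q := (rootMultiplicity_pos hq0).mpr hzq
      rw [hmulP, rootMultiplicity_eq_zero hpz, rootMultiplicity_eq_zero hpqz]
      omega
  -- sum the multiplicities
  have hsumP : P.natDegree = ∑ z ∈ S, rootMultiplicity z P :=
    natDegree_eq_sum_rm P hP0 (by rw [hS])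
  have hsumW : W.natDegree = ∑ z ∈ S, rootMultiplicity z W :=
    natDegree_eq_sum_rm W hW0 hWsub
  have hPdeg : P.natDegree = D + D + e := by
    rw [hPdef, natDegree_mul (mul_ne_zero hp0 hpq0) hq0, natDegree_mul hp0 hpq0,
      hp, hdpq, ← he]
  have hcount : P.natDegree = W.natDegree + S.card := by
    rw [hsumP, hsumW, Finset.sum_congr rfl hkey, Finset.sum_add_distrib,
      Finset.sum_const, smul_eq_mul, mul_one]
  have hScard : S.card = D + 1 := by omega
  -- S is the disjoint union of the three root sets
  have hroots : P.roots = p.roots + (p - q).roots + q.roots := by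
    rw [hPdef, roots_mul hP0, roots_mul (mul_ne_zero hp0 hpq0)]
  have hSunion : S = p.roots.toFinset ∪ (p - q).roots.toFinset ∪ q.roots.toFinset := by
    rw [hS, hroots, Multiset.toFinset_add, Multiset.toFinset_add]
  have hd1 : Disjoint p.roots.toFinset (p - q).roots.toFinset := by
    rw [Finset.disjoint_left]
    intro z h1 h2
    rw [Multiset.mem_toFinset, mem_roots hp0] at h1
    rw [Multiset.mem_toFinset, mem_roots hpq0] at h2
    exact hnc z h1 (by rw [IsRoot, show q = p - (p - q) by ring, eval_sub, h1, h2, sub_zero])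
  have hd2 : Disjoint (p.roots.toFinset ∪ (p - q).roots.toFinset) q.roots.toFinset := by
    rw [Finset.disjoint_left]
    intro z h1 h2
    rw [Multiset.mem_toFinset, mem_roots hq0] at h2
    rcases Finset.mem_union.mp h1 with h1 | h1
    · rw [Multiset.mem_toFinset, mem_roots hp0] at h1
      exact hnc z h1 h2
    · rw [Multiset.mem_toFinset, mem_roots hpq0] at h1
      exact hnc z (by rw [IsRoot, show p = (p - q) + q by ring, eval_add, h1, h2, add_zero]) h2
  have hcard : S.card = p.roots.toFinset.card + (p - q).roots.toFinset.card
      + q.roots.toFinset.card := by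
    rw [hSunion, Finset.card_union_of_disjoint hd2, Finset.card_union_of_disjoint hd1]
  simp only [numDistinctRoots]
  omega
end

section
/- Let p, q ∈ ℂ[X] be coprime polynomials with deg p = D ≥ 1 and deg q < D, so that φ = p/q defines a rational map of degree D of the Riemann sphere with φ(∞) = ∞. If some complex root of the Wronskian p′q − pq′ is not a root of the product p·(p − q)·q, then R(p) + R(p − q) + R(q) + 1 ≥ D + 3. -/
open Polynomial

open UniqueFactorizationMonoid UniqueFactorizationDomain EuclideanDomain in
theorem natDegree_radical_eq_numDistinctRoots {f : ℂ[X]} (hf : f ≠ 0) :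
    (radical f).natDegree = numDistinctRoots f := by
  have hrne : radical f ≠ 0 := radical_ne_zero
  have memNF : ∀ a : ℂ[X], a ∈ (primeFactors f).val → a ∈ normalizedFactors f := by
    intro a ha
    exact mem_primeFactors.mp ha
  have hrad : radical f = ((primeFactors f).val).prod := by
    rw [radical, Finset.prod]
    simp
  have hsq : Squarefree (radical f) := by
    rw [squarefree_iff_nodup_normalizedFactors hrne]
    have hnf : normalizedFactors (radical f) = (primeFactors f).val.map normalize := by
      rw [hrad]
      exact normalizedFactors_prod_eq _ fun a ha =>
        irreducible_of_normalized_factor a (memNF a ha)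
    rw [hnf]
    have hmap : (primeFactors f).val.map normalize = (primeFactors f).val :=
      (Multiset.map_congr rfl fun a ha =>
        (normalize_normalized_factor a (memNF a ha)).trans rfl).trans
        (Multiset.map_id _)
    rw [hmap]
    exact (primeFactors f).nodup
  have hsep : (radical f).Separable := PerfectField.separable_iff_squarefree.mpr hsq
  have hnodup : (radical f).roots.Nodup := nodup_roots hsep
  have hsplits : (radical f).Splits := IsAlgClosed.splits _
  have hcard : Multiset.card (radical f).roots = (radical f).natDegree :=
    (splits_iff_card_roots).mp hsplits
  have hroots : (radical f).roots.toFinset = f.roots.toFinset := by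
    ext z
    simp only [Multiset.mem_toFinset, mem_roots, hf, hrne, ne_eq, not_false_iff, true_and]
    constructor
    · intro hz
      exact hz.dvd radical_dvd_self
    · intro hz
      have hdvd : (X - C z) ∣ f := dvd_iff_isRoot.mpr hz
      obtain ⟨g, hg, hassoc⟩ :=
        exists_mem_normalizedFactors_of_dvd hf (prime_X_sub_C z).irreducible hdvd
      have hgdvd : g ∣ radical f := by
        rw [hrad]
        refine Multiset.dvd_prod ?_
        exact mem_primeFactors.mpr hg
      exact dvd_iff_isRoot.mp (hassoc.dvd.trans hgdvd)
  calc (radical f).natDegree = Multiset.card (radical f).roots := hcard.symm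
    _ = (radical f).roots.toFinset.card := (Multiset.toFinset_card_of_nodup hnodup).symm
    _ = f.roots.toFinset.card := by rw [hroots]
    _ = numDistinctRoots f := rfl

/-- Lemma 2.2(a), second half: if the rational map `φ = p/q` (of degree `D`, with
`φ(∞) = ∞`) has a finite branch point — a root of the Wronskian `p′q − pq′` —
outside the fibers above `{0, 1, ∞}`, then there are at least `D + 3` distinct
points above `{0, 1, ∞}`. -/
theorem non_belyi_fiber_count (p q : ℂ[X]) (D : ℕ) (hD : 1 ≤ D)
    (hp : p.natDegree = D) (hq : q.natDegree < D) (hcop : IsCoprime p q)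
    (hbr : ∃ z : ℂ, (derivative p * q - p * derivative q).IsRoot z ∧
      ¬ (p * (p - q) * q).IsRoot z) :
    numDistinctRoots p + numDistinctRoots (p - q) + numDistinctRoots q + 1 ≥ D + 3 := by
  classical
  obtain ⟨z, hz1, hz2⟩ := hbr
  have hp0 : p ≠ 0 := by
    intro h
    rw [h, natDegree_zero] at hp
    omega
  have hq0 : q ≠ 0 := by
    rintro rfl
    have hu := isCoprime_zero_right.mp hcop
    have := natDegree_eq_zero_of_isUnit hu
    omega
  have h_pq_deg : (p - q).natDegree = D := by
    rw [natDegree_sub_eq_left_of_natDegree_lt (by rw [hp]; exact hq), hp]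
  have hpq0 : p - q ≠ 0 := by
    intro h
    rw [h, natDegree_zero] at h_pq_deg
    omega
  -- coprimality of the three pieces
  have hab : IsCoprime (p - q) q := by
    have := hcop.add_mul_left_left (-1)
    simpa [mul_neg_one, ← sub_eq_add_neg] using this
  have hbc : IsCoprime q (-p) := hcop.symm.neg_right
  have hca : IsCoprime (-p) (p - q) := by
    have h := (hcop.neg_right).add_mul_left_right 1
    have h' : IsCoprime p (p - q) := by
      have : -q + p * 1 = p - q := by ring
      rwa [this] at h
    exact h'.neg_left
  set w : ℂ[X] := wronskian (p - q) q with hw_def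
  have hw_eq : w = -(derivative p * q - p * derivative q) := by
    rw [hw_def, wronskian, derivative_sub]
    ring
  have hwne : w ≠ 0 := by
    intro h
    obtain ⟨h1, h2⟩ := hab.wronskian_eq_zero_iff.mp h
    have hdp : derivative p = 0 := by
      have : derivative p = derivative (p - q) + derivative q := by
        rw [derivative_sub]; ring
      rw [this, h1, h2, add_zero]
    have := natDegree_eq_zero_of_derivative_eq_zero hdp
    omega
  have hz_w : w.IsRoot z := by
    rw [IsRoot, hw_eq, eval_neg, hz1, neg_zero]
  have hXz : (X - C z) ∣ w := dvd_iff_isRoot.mpr hz_w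
  -- divRadical of the product divides w
  have hsum : (p - q) + q + (-p) = 0 := by ring
  have wbc : w = wronskian q (-p) := wronskian_eq_of_sum_zero hsum
  have abc_dr_dvd_w : EuclideanDomain.divRadical ((p - q) * q * (-p)) ∣ w := by
    have adr := divRadical_dvd_wronskian_left (p - q) q
    have bdr := divRadical_dvd_wronskian_right (p - q) q
    have cdr := divRadical_dvd_wronskian_right q (-p)
    rw [← hw_def] at adr bdr
    rw [← wbc] at cdr
    rw [EuclideanDomain.divRadical_mul (hca.symm.mul_left hbc),
      EuclideanDomain.divRadical_mul hab]
    exact (hca.divRadical.symm.mul_left hbc.divRadical).mul_dvd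
      (hab.divRadical.mul_dvd adr bdr) cdr
  have habc0 : (p - q) * q * (-p) ≠ 0 :=
    mul_ne_zero (mul_ne_zero hpq0 hq0) (neg_ne_zero.mpr hp0)
  have hdr0 : EuclideanDomain.divRadical ((p - q) * q * (-p)) ≠ 0 :=
    EuclideanDomain.divRadical_ne_zero habc0
  -- X - C z is coprime to the divRadical
  have hcop_Xz : IsCoprime (X - C z) (EuclideanDomain.divRadical ((p - q) * q * (-p))) := by
    rw [(prime_X_sub_C z).irreducible.coprime_iff_not_dvd]
    intro hdvd
    have h1 : (X - C z) ∣ (p - q) * q * (-p) :=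
      hdvd.trans (EuclideanDomain.divRadical_dvd_self _)
    have h2 : ((p - q) * q * (-p)).IsRoot z := dvd_iff_isRoot.mp h1
    apply hz2
    have heq : (p - q) * q * (-p) = -(p * (p - q) * q) := by ring
    rw [heq, IsRoot, eval_neg, neg_eq_zero] at h2
    exact h2
  have hdvd2 : (X - C z) * EuclideanDomain.divRadical ((p - q) * q * (-p)) ∣ w :=
    hcop_Xz.mul_dvd hXz abc_dr_dvd_w
  -- degree bounds
  have hle : ((X - C z) * EuclideanDomain.divRadical ((p - q) * q * (-p))).natDegree
      ≤ w.natDegree := natDegree_le_of_dvd hdvd2 hwne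
  have hmuldeg : ((X - C z) * EuclideanDomain.divRadical ((p - q) * q * (-p))).natDegree
      = 1 + (EuclideanDomain.divRadical ((p - q) * q * (-p))).natDegree := by
    rw [natDegree_mul (X_sub_C_ne_zero z) hdr0, natDegree_X_sub_C]
  have hwlt : w.natDegree < D + q.natDegree := by
    have := natDegree_wronskian_lt_add hwne
    rwa [h_pq_deg] at this
  have hdr_lt : 1 + (EuclideanDomain.divRadical ((p - q) * q * (-p))).natDegree
      < D + q.natDegree := lt_of_le_of_lt (hmuldeg ▸ hle) hwlt
  -- total degree decomposition
  have h3 : (EuclideanDomain.divRadical ((p - q) * q * (-p))).natDegree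
      + (UniqueFactorizationMonoid.radical ((p - q) * q * (-p))).natDegree
      = ((p - q) * q * (-p)).natDegree := by
    rw [← natDegree_mul hdr0 UniqueFactorizationMonoid.radical_ne_zero,
      EuclideanDomain.divRadical_mul_radical]
  have h4 : ((p - q) * q * (-p)).natDegree = D + q.natDegree + D := by
    rw [natDegree_mul (mul_ne_zero hpq0 hq0) (neg_ne_zero.mpr hp0),
      natDegree_mul hpq0 hq0, natDegree_neg, h_pq_deg, hp]
  have h5 : (UniqueFactorizationMonoid.radical ((p - q) * q * (-p))).natDegree
      = numDistinctRoots (p - q) + numDistinctRoots q + numDistinctRoots p := by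
    rw [UniqueFactorizationMonoid.radical_mul (hca.symm.mul_left hbc).isRelPrime,
      UniqueFactorizationMonoid.radical_mul hab.isRelPrime,
      UniqueFactorizationDomain.radical_neg,
      natDegree_mul (mul_ne_zero UniqueFactorizationMonoid.radical_ne_zero
        UniqueFactorizationMonoid.radical_ne_zero)
        UniqueFactorizationMonoid.radical_ne_zero,
      natDegree_mul UniqueFactorizationMonoid.radical_ne_zero
        UniqueFactorizationMonoid.radical_ne_zero,
      natDegree_radical_eq_numDistinctRoots hpq0,
      natDegree_radical_eq_numDistinctRoots hq0,
      natDegree_radical_eq_numDistinctRoots hp0]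
  omega
end

section
/- Let p, q ∈ ℂ[X] be coprime polynomials with deg p = D ≥ 1 and deg q < D, so that φ = p/q defines a rational map of degree D of the Riemann sphere with φ(∞) = ∞. If R(p) + R(p − q) + R(q) + 1 = D + 3, then there is exactly one complex number r such that r is a root of the Wronskian p′q − pq′ but not a root of p·(p − q)·q, and moreover r is a simple root of p′q − pq′. -/
open Polynomial

lemma card_filter_mem (M : Multiset ℂ) (A : Finset ℂ) :
    (M.filter (· ∈ A)).card = ∑ α ∈ A, M.count α := by
  classical
  have hsub : (M.filter (· ∈ A)).toFinset ⊆ A := by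
    intro a ha
    exact (Multiset.mem_filter.mp (Multiset.mem_toFinset.mp ha)).2
  rw [← Multiset.toFinset_sum_count_eq (M.filter (· ∈ A))]
  rw [Finset.sum_subset hsub]
  · exact Finset.sum_congr rfl fun a ha => by
      rw [Multiset.count_filter, if_pos ha]
  · intro a _ ha
    exact Multiset.count_eq_zero.mpr fun h => ha (Multiset.mem_toFinset.mpr h)

lemma sum_mult_add_card (f : ℂ[X]) :
    ∑ α ∈ f.roots.toFinset, (rootMultiplicity α f - 1) + f.roots.toFinset.card
      = f.natDegree := by
  classical
  have hsplit : f.natDegree = Multiset.card f.roots := by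
    have := (IsAlgClosed.splits f).natDegree_eq_card_roots
    exact this
  rw [hsplit, ← Multiset.toFinset_sum_count_eq f.roots, Finset.card_eq_sum_ones,
    ← Finset.sum_add_distrib]
  refine Finset.sum_congr rfl fun a ha => ?_
  have h1 : 1 ≤ f.roots.count a := Multiset.one_le_count_iff_mem.mpr (Multiset.mem_toFinset.mp ha)
  rw [count_roots]
  rw [count_roots] at h1
  omega

lemma wronskian_rootMultiplicity {f g : ℂ[X]} (hf : f ≠ 0) {α : ℂ}
    (hfα : f.IsRoot α) (hgα : ¬ g.IsRoot α) :
    rootMultiplicity α (derivative f * g - f * derivative g)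
      = rootMultiplicity α f - 1 := by
  classical
  set m := rootMultiplicity α f with hm
  have hm1 : 1 ≤ m := (rootMultiplicity_pos hf).mpr hfα
  obtain ⟨k, hk⟩ : ∃ k, m = k + 1 := ⟨m - 1, (Nat.succ_pred_eq_of_pos hm1).symm⟩
  set u := f /ₘ (X - C α) ^ m with hu
  have hfu : (X - C α) ^ m * u = f := pow_mul_divByMonic_rootMultiplicity_eq f α
  have huα : u.eval α ≠ 0 := eval_divByMonic_pow_rootMultiplicity_ne_zero α hf
  set V : ℂ[X] := C ((k : ℂ) + 1) * u * g
      + (X - C α) * (derivative u * g - u * derivative g) with hV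
  have hVα : V.eval α ≠ 0 := by
    simp only [hV, eval_add, eval_mul, eval_sub, eval_C, eval_X, sub_self, zero_mul, add_zero]
    exact mul_ne_zero (mul_ne_zero (Nat.cast_add_one_ne_zero k) huα) hgα
  have key : derivative f * g - f * derivative g = (X - C α) ^ k * V := by
    conv_lhs => rw [← hfu]
    rw [hk, derivative_mul, derivative_pow]
    simp only [Nat.add_sub_cancel, derivative_sub, derivative_X, derivative_C, sub_zero,
      Nat.cast_add, Nat.cast_one, hV]
    ring
  have hV0 : V ≠ 0 := fun h => hVα (by simp [h])
  have hne : (X - C α) ^ k * V ≠ 0 :=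
    mul_ne_zero (pow_ne_zero _ (X_sub_C_ne_zero α)) hV0
  rw [key, rootMultiplicity_mul hne, rootMultiplicity_X_sub_C_pow,
    rootMultiplicity_eq_zero (fun h => hVα h)]
  omega

lemma deriv_info (f : ℂ[X]) (hf : 1 ≤ f.natDegree) :
    (derivative f).natDegree = f.natDegree - 1 ∧
    (derivative f).coeff (f.natDegree - 1) = f.natDegree * f.leadingCoeff := by
  have hc : (derivative f).coeff (f.natDegree - 1)
      = f.coeff (f.natDegree - 1 + 1) * ((f.natDegree - 1 : ℕ) + 1) := coeff_derivative f _
  have h1 : f.natDegree - 1 + 1 = f.natDegree := Nat.succ_pred_eq_of_pos hf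
  rw [h1] at hc
  have hl : f.leadingCoeff ≠ 0 := leadingCoeff_ne_zero.mpr (fun h => by simp [h] at hf)
  have hc' : (derivative f).coeff (f.natDegree - 1) = f.natDegree * f.leadingCoeff := by
    rw [hc, leadingCoeff, Nat.cast_sub hf]
    push_cast
    ring
  refine ⟨le_antisymm (natDegree_derivative_le f) (le_natDegree_of_ne_zero ?_), hc'⟩
  rw [hc']
  exact mul_ne_zero (Nat.cast_ne_zero.mpr (by omega)) hl

/-- Lemma 2.2(b): if the rational map `φ = p/q` (of degree `D`, with `φ(∞) = ∞`)
has exactly `D + 3` distinct points above `{0, 1, ∞}`, then there is exactly one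
branch point of `φ` not above `{0, 1, ∞}` — i.e. exactly one root `r` of the
Wronskian `p′q − pq′` that is not a root of `p·(p − q)·q` — and it is a simple
root of the Wronskian. -/
theorem unique_extra_branch_point (p q : ℂ[X]) (D : ℕ) (hD : 1 ≤ D)
    (hp : p.natDegree = D) (hq : q.natDegree < D) (hcop : IsCoprime p q)
    (hcount : numDistinctRoots p + numDistinctRoots (p - q) + numDistinctRoots q + 1
      = D + 3) :
    ∃ r : ℂ, (derivative p * q - p * derivative q).IsRoot r ∧
      ¬ (p * (p - q) * q).IsRoot r ∧
      (∀ s : ℂ, (derivative p * q - p * derivative q).IsRoot s →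
        ¬ (p * (p - q) * q).IsRoot s → s = r) ∧
      rootMultiplicity r (derivative p * q - p * derivative q) = 1 := by
  classical
  set W := derivative p * q - p * derivative q with hWdef
  set e := q.natDegree with he
  -- nonvanishing
  have hp0 : p ≠ 0 := fun h => by rw [h, natDegree_zero] at hp; omega
  have hq0 : q ≠ 0 := by
    intro h
    rw [h] at hcop
    have := natDegree_eq_zero_of_isUnit (isCoprime_zero_right.mp hcop)
    omega
  have hdpq : (p - q).natDegree = D := by
    rw [natDegree_sub_eq_left_of_natDegree_lt (by rw [hp]; exact hq), hp]
  have hpq0 : p - q ≠ 0 := fun h => by rw [h, natDegree_zero] at hdpq; omega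
  have hcop2 : IsCoprime (p - q) q := by
    have := hcop.add_mul_left_left (-1)
    rwa [mul_neg_one, ← sub_eq_add_neg] at this
  -- coprime polynomials have no common root
  have noRoot : ∀ {a b : ℂ[X]}, IsCoprime a b → ∀ {α : ℂ}, a.IsRoot α → ¬ b.IsRoot α := by
    rintro a b ⟨x, y, hxy⟩ α ha hb
    have h := congrArg (eval α) hxy
    simp only [eval_add, eval_mul, eval_one, ha.eq_zero, hb.eq_zero, mul_zero, add_zero] at h
    exact one_ne_zero h.symm
  -- multiplicities of W at roots of p, p - q, q
  have hWp : ∀ α : ℂ, p.IsRoot α → rootMultiplicity α W = rootMultiplicity α p - 1 :=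
    fun α hα => wronskian_rootMultiplicity hp0 hα (noRoot hcop hα)
  have hWpq : ∀ α : ℂ, (p - q).IsRoot α →
      rootMultiplicity α W = rootMultiplicity α (p - q) - 1 := by
    intro α hα
    have h2 := wronskian_rootMultiplicity hpq0 hα (noRoot hcop2 hα)
    have h3 : derivative (p - q) * q - (p - q) * derivative q = W := by
      rw [hWdef, derivative_sub]; ring
    rwa [h3] at h2
  -- degree of W
  have hab : p.leadingCoeff ≠ 0 := leadingCoeff_ne_zero.mpr hp0
  have hbb : q.leadingCoeff ≠ 0 := leadingCoeff_ne_zero.mpr hq0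
  obtain ⟨hdp', hcp'⟩ := deriv_info p (by omega)
  rw [hp] at hdp' hcp'
  have hWdeg : W ≠ 0 ∧ W.natDegree + 1 = D + e := by
    rcases Nat.eq_zero_or_pos e with he0 | he1
    · have hqc : derivative q = 0 := derivative_of_natDegree_zero (by omega)
      have hW' : W = derivative p * q := by rw [hWdef, hqc, mul_zero, sub_zero]
      have hp'0 : derivative p ≠ 0 := by
        intro h
        have := natDegree_eq_zero_of_derivative_eq_zero h
        omega
      constructor
      · rw [hW']; exact mul_ne_zero hp'0 hq0
      · rw [hW', natDegree_mul hp'0 hq0, hdp', ← he]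
        omega
    · obtain ⟨hdq', hcq'⟩ := deriv_info q he1
      rw [← he] at hdq' hcq'
      have hlp' : (derivative p).leadingCoeff = (D : ℂ) * p.leadingCoeff := by
        rw [leadingCoeff, hdp', hcp']
      have hlq' : (derivative q).leadingCoeff = (e : ℂ) * q.leadingCoeff := by
        rw [leadingCoeff, hdq', hcq']
      have c1 : (derivative p * q).coeff (D + e - 1)
          = (D : ℂ) * p.leadingCoeff * q.leadingCoeff := by
        have h := coeff_mul_degree_add_degree (derivative p) q
        rw [hdp', ← he] at h
        rw [show D + e - 1 = D - 1 + e by omega, h, hlp']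
      have c2 : (p * derivative q).coeff (D + e - 1)
          = (e : ℂ) * p.leadingCoeff * q.leadingCoeff := by
        have h := coeff_mul_degree_add_degree p (derivative q)
        rw [hdq', hp] at h
        rw [show D + e - 1 = D + (e - 1) by omega, h, hlq']
        ring
      have hco : W.coeff (D + e - 1) = ((D : ℂ) - (e : ℂ)) * (p.leadingCoeff * q.leadingCoeff) := by
        rw [hWdef, coeff_sub, c1, c2]
        ring
      have hconz : W.coeff (D + e - 1) ≠ 0 := by
        rw [hco]
        refine mul_ne_zero (sub_ne_zero.mpr ?_) (mul_ne_zero hab hbb)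
        exact_mod_cast fun h => absurd h (by omega : D ≠ e)
      have hle : W.natDegree ≤ D + e - 1 := by
        refine le_trans (natDegree_sub_le _ _) (max_le ?_ ?_)
        · exact le_trans (natDegree_mul_le) (by rw [hdp', ← he]; omega)
        · exact le_trans (natDegree_mul_le) (by rw [hdq', hp]; omega)
      have hW0 : W ≠ 0 := fun h => hconz (by rw [h, coeff_zero])
      have : W.natDegree = D + e - 1 := le_antisymm hle (le_natDegree_of_ne_zero hconz)
      exact ⟨hW0, by omega⟩
  obtain ⟨hW0, hWdegree⟩ := hWdeg
  have hWq : ∀ α : ℂ, q.IsRoot α → rootMultiplicity α W = rootMultiplicity α q - 1 := by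
    intro α hα
    have h2 := wronskian_rootMultiplicity hq0 hα (noRoot hcop.symm hα)
    have h3 : derivative q * p - q * derivative p = C (-1) * W := by
      rw [hWdef]; simp only [map_neg, map_one]; ring
    rw [h3, rootMultiplicity_mul (mul_ne_zero (C_ne_zero.mpr (by norm_num)) hW0),
      rootMultiplicity_C, zero_add] at h2
    exact h2
  set Fp := p.roots.toFinset with hFp
  set Fpq := (p - q).roots.toFinset with hFpq
  set Fq := q.roots.toFinset with hFq
  set A : Finset ℂ := Fp ∪ Fpq ∪ Fq with hA
  have memFp : ∀ {α : ℂ}, α ∈ Fp ↔ p.IsRoot α := fun {α} => by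
    rw [hFp, Multiset.mem_toFinset, mem_roots hp0]
  have memFpq : ∀ {α : ℂ}, α ∈ Fpq ↔ (p - q).IsRoot α := fun {α} => by
    rw [hFpq, Multiset.mem_toFinset, mem_roots hpq0]
  have memFq : ∀ {α : ℂ}, α ∈ Fq ↔ q.IsRoot α := fun {α} => by
    rw [hFq, Multiset.mem_toFinset, mem_roots hq0]
  have dis1 : Disjoint Fp Fpq := by
    rw [Finset.disjoint_left]
    intro α h1 h2
    have hroot_p := memFp.mp h1
    have hroot_pq := memFpq.mp h2
    have hqr : q.IsRoot α := by
      have h := hroot_pq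
      simp only [IsRoot, eval_sub, hroot_p.eq_zero, zero_sub, neg_eq_zero] at h
      exact h
    exact noRoot hcop hroot_p hqr
  have dis2 : Disjoint (Fp ∪ Fpq) Fq := by
    rw [Finset.disjoint_left]
    intro α h1 h2
    have hqr := memFq.mp h2
    rcases Finset.mem_union.mp h1 with h | h
    · exact noRoot hcop (memFp.mp h) hqr
    · exact noRoot hcop2 (memFpq.mp h) hqr
  have sum1 : ∑ α ∈ Fp, rootMultiplicity α W + Fp.card = D := by
    have h2 := sum_mult_add_card p
    rw [← hFp, hp] at h2
    rw [Finset.sum_congr rfl (fun α hα => hWp α (memFp.mp hα))]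
    exact h2
  have sum2 : ∑ α ∈ Fpq, rootMultiplicity α W + Fpq.card = D := by
    have h2 := sum_mult_add_card (p - q)
    rw [← hFpq, hdpq] at h2
    rw [Finset.sum_congr rfl (fun α hα => hWpq α (memFpq.mp hα))]
    exact h2
  have sum3 : ∑ α ∈ Fq, rootMultiplicity α W + Fq.card = e := by
    have h2 := sum_mult_add_card q
    rw [← hFq, ← he] at h2
    rw [Finset.sum_congr rfl (fun α hα => hWq α (memFq.mp hα))]
    exact h2
  have hsumA : ∑ α ∈ A, rootMultiplicity α W + (Fp.card + Fpq.card + Fq.card)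
      = D + D + e := by
    rw [hA, Finset.sum_union dis2, Finset.sum_union dis1]
    omega
  set M := W.roots with hM
  have hMcard : Multiset.card M + 1 = D + e := by
    have h := (IsAlgClosed.splits W).natDegree_eq_card_roots
    rw [← hM] at h
    omega
  have hinA : (M.filter (· ∈ A)).card = ∑ α ∈ A, rootMultiplicity α W := by
    rw [card_filter_mem]
    exact Finset.sum_congr rfl fun α _ => by rw [hM, count_roots]
  have hsplitM : (M.filter (· ∈ A)).card + (M.filter (fun a => ¬ a ∈ A)).card
      = Multiset.card M := by
    rw [← Multiset.card_add, Multiset.filter_add_not]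
  have hcards : Fp.card + Fpq.card + Fq.card = D + 2 := by
    have h2 := hcount
    simp only [numDistinctRoots] at h2
    rw [← hFp, ← hFpq, ← hFq] at h2
    omega
  have hout : (M.filter (fun a => ¬ a ∈ A)).card = 1 := by omega
  obtain ⟨r, hr⟩ := Multiset.card_eq_one.mp hout
  have hrmem : r ∈ M ∧ r ∉ A := by
    have h : r ∈ M.filter (fun a => ¬ a ∈ A) := by
      rw [hr]; exact Multiset.mem_singleton_self r
    exact Multiset.mem_filter.mp h
  have hAiff : ∀ s : ℂ, s ∈ A ↔ (p * (p - q) * q).IsRoot s := by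
    intro s
    rw [hA, Finset.mem_union, Finset.mem_union]
    constructor
    · rintro ((h | h) | h)
      · simp [IsRoot, eval_mul, (memFp.mp h).eq_zero]
      · simp [IsRoot, eval_mul, (memFpq.mp h).eq_zero]
      · simp [IsRoot, eval_mul, (memFq.mp h).eq_zero]
    · intro h
      simp only [IsRoot, eval_mul, mul_eq_zero] at h
      rcases h with (h | h) | h
      · exact Or.inl (Or.inl (memFp.mpr h))
      · exact Or.inl (Or.inr (memFpq.mpr h))
      · exact Or.inr (memFq.mpr h)
  refine ⟨r, ?_, ?_, ?_, ?_⟩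
  · exact (mem_roots hW0).mp (hM ▸ hrmem.1)
  · exact fun h => hrmem.2 ((hAiff r).mpr h)
  · intro s hs1 hs2
    have hsM : s ∈ M.filter (fun a => ¬ a ∈ A) :=
      Multiset.mem_filter.mpr ⟨by rw [hM]; exact (mem_roots hW0).mpr hs1,
        fun hsA => hs2 ((hAiff s).mp hsA)⟩
    rw [hr] at hsM
    exact Multiset.mem_singleton.mp hsM
  · rw [← count_roots, ← hM]
    have hfan := Multiset.filter_add_not (fun a => a ∈ A) M
    conv_lhs => rw [← hfan]
    rw [Multiset.count_add, hr, Multiset.count_singleton_self,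
      Multiset.count_filter, if_neg hrmem.2]
end

section
/- In ℂ[X] the identity 64X(X − 1)³ − (8X − 9) = (8X² − 12X + 3)² holds; moreover the polynomials X(X − 1), 8X² − 12X + 3, and 8X − 9 are each squarefree and pairwise coprime. (This certifies that φ(x) = 64x(x−1)³/(8x−9) is a Belyi covering of degree 4 with branching pattern 3+1 above 0, 2+2 above 1, and 3+1 above ∞ — the covering H₄₇.) -/
open Polynomial

lemma sf_aux (p u v : ℂ[X]) (h : u * p + v * derivative p = 1) : Squarefree p :=
  (show p.Separable from ⟨u, v, h⟩).squarefree

/-- Certificate for the covering `H₄₇`: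
`64X(X − 1)³ − (8X − 9) = (8X² − 12X + 3)²` in `ℂ[X]`, and the polynomials
`X(X − 1)`, `8X² − 12X + 3`, `8X − 9` are squarefree and pairwise have no
common complex root.  Hence `φ(x) = 64x(x−1)³/(8x−9)` is a Belyi covering of
degree 4 with branching pattern `3+1 = 2+2 = 3+1`. -/
theorem H47_certificate :
    (64 : ℂ[X]) * X * (X - 1) ^ 3 - (8 * X - 9) = (8 * X ^ 2 - 12 * X + 3) ^ 2 ∧
    Squarefree ((X : ℂ[X]) * (X - 1)) ∧
    Squarefree ((8 : ℂ[X]) * X ^ 2 - 12 * X + 3) ∧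
    Squarefree ((8 : ℂ[X]) * X - 9) ∧
    (∀ z : ℂ, ¬(((X : ℂ[X]) * (X - 1)).IsRoot z ∧
      ((8 : ℂ[X]) * X ^ 2 - 12 * X + 3).IsRoot z)) ∧
    (∀ z : ℂ, ¬(((X : ℂ[X]) * (X - 1)).IsRoot z ∧
      ((8 : ℂ[X]) * X - 9).IsRoot z)) ∧
    (∀ z : ℂ, ¬(((8 : ℂ[X]) * X ^ 2 - 12 * X + 3).IsRoot z ∧
      ((8 : ℂ[X]) * X - 9).IsRoot z)) := by
  refine ⟨by ring, ?_, ?_, ?_, ?_, ?_, ?_⟩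
  · apply sf_aux _ (-4) (2 * X - 1)
    rw [show derivative ((X : ℂ[X]) * (X - 1)) = 2 * X - 1 by
      simp [derivative_mul]; ring]
    apply Polynomial.funext
    intro x
    simp only [eval_add, eval_mul, eval_sub, eval_pow, eval_X, eval_C, eval_one,
      eval_ofNat, eval_neg]
    ring
  · apply sf_aux _ (C (-2/3)) (C (1/48) * (16 * X - 12))
    rw [show derivative ((8 : ℂ[X]) * X ^ 2 - 12 * X + 3) = 16 * X - 12 by
      simp [derivative_mul, map_ofNat]; ring]
    apply Polynomial.funext
    intro x
    simp only [eval_add, eval_mul, eval_sub, eval_pow, eval_X, eval_C, eval_one,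
      eval_ofNat]
    ring
  · apply sf_aux _ 0 (C (1/8))
    rw [show derivative ((8 : ℂ[X]) * X - 9) = 8 by simp [derivative_mul]]
    apply Polynomial.funext
    intro x
    simp only [eval_add, eval_mul, eval_sub, eval_pow, eval_X, eval_C, eval_one,
      eval_ofNat, eval_zero]
    ring
  · rintro z ⟨h1, h2⟩
    simp only [IsRoot, eval_mul, eval_add, eval_sub, eval_pow, eval_X, eval_one,
      eval_ofNat, eval_mul] at h1 h2
    rcases mul_eq_zero.1 h1 with h | h
    · rw [h] at h2; norm_num at h2
    · have : z = 1 := by linear_combination h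
      rw [this] at h2; norm_num at h2
  · rintro z ⟨h1, h2⟩
    simp only [IsRoot, eval_mul, eval_add, eval_sub, eval_pow, eval_X, eval_one,
      eval_ofNat] at h1 h2
    have hz : z = 9/8 := by linear_combination h2 / 8
    rw [hz] at h1; norm_num at h1
  · rintro z ⟨h1, h2⟩
    simp only [IsRoot, eval_mul, eval_add, eval_sub, eval_pow, eval_X, eval_one,
      eval_ofNat] at h1 h2
    have hz : z = 9/8 := by linear_combination h2 / 8
    rw [hz] at h1; norm_num at h1
end

section
/- In ℂ[X] the identity X²(4X² − 3)² − 1 = (X − 1)(X + 1)(2X − 1)²(2X + 1)² holds; moreover the polynomials X(4X² − 3) and (X − 1)(X + 1)(2X − 1)(2X + 1) are each squarefree and coprime to each other. (This certifies that φ(x) = x²(4x²−3)² is a Belyi covering of degree 6 with branching pattern [2]³ above 0, 2+2+1+1 above 1, and a single point of order 6 above ∞ — the covering H₃₉.) -/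
open Polynomial

private lemma deriv_p : derivative ((X : ℂ[X]) * (4 * X ^ 2 - 3)) = 12 * X ^ 2 - 3 := by
  have h : (X : ℂ[X]) * (4 * X ^ 2 - 3) = C 4 * X ^ 3 - C 3 * X := by
    simp only [map_ofNat]; ring
  rw [h]
  simp only [derivative_sub, derivative_C_mul, derivative_X_pow, derivative_X]
  apply Polynomial.funext
  intro r
  simp only [eval_add, eval_mul, eval_sub, eval_neg, eval_ofNat, eval_pow, eval_X,
    eval_C, eval_one, eval_natCast, eval_zero]
  push_cast
  ring

private lemma deriv_q :
    derivative (((X : ℂ[X]) - 1) * (X + 1) * (2 * X - 1) * (2 * X + 1))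
      = 16 * X ^ 3 - 10 * X := by
  have h : ((X : ℂ[X]) - 1) * (X + 1) * (2 * X - 1) * (2 * X + 1)
      = C 4 * X ^ 4 - C 5 * X ^ 2 + C 1 := by
    simp only [map_ofNat, map_one]; ring
  rw [h]
  simp only [derivative_add, derivative_sub, derivative_C_mul, derivative_X_pow,
    derivative_C]
  apply Polynomial.funext
  intro r
  simp only [eval_add, eval_mul, eval_sub, eval_neg, eval_ofNat, eval_pow, eval_X,
    eval_C, eval_one, eval_natCast, eval_zero]
  push_cast
  ring

/-- Certificate for the covering `H₃₉`:
`X²(4X² − 3)² − 1 = (X − 1)(X + 1)(2X − 1)²(2X + 1)²` in `ℂ[X]`, and the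
polynomials `X(4X² − 3)` and `(X − 1)(X + 1)(2X − 1)(2X + 1)` are squarefree
with no common complex root.  Hence `φ(x) = x²(4x²−3)²` is a Belyi covering of
degree 6 with branching pattern `[2]³ = 2+2+1+1 = 6`. -/
theorem H39_certificate :
    (X : ℂ[X]) ^ 2 * (4 * X ^ 2 - 3) ^ 2 - 1
        = (X - 1) * (X + 1) * (2 * X - 1) ^ 2 * (2 * X + 1) ^ 2 ∧
    Squarefree ((X : ℂ[X]) * (4 * X ^ 2 - 3)) ∧
    Squarefree (((X : ℂ[X]) - 1) * (X + 1) * (2 * X - 1) * (2 * X + 1)) ∧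
    (∀ z : ℂ, ¬(((X : ℂ[X]) * (4 * X ^ 2 - 3)).IsRoot z ∧
      (((X : ℂ[X]) - 1) * (X + 1) * (2 * X - 1) * (2 * X + 1)).IsRoot z)) := by
  refine ⟨by ring, ?_, ?_, ?_⟩
  · have hsep : Separable ((X : ℂ[X]) * (4 * X ^ 2 - 3)) := by
      refine ⟨-2 * X, C (2/3) * X ^ 2 - C (1/3), ?_⟩
      rw [deriv_p]
      apply Polynomial.funext
      intro r
      simp only [eval_add, eval_mul, eval_sub, eval_neg, eval_ofNat, eval_pow, eval_X,
        eval_C, eval_one]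
      ring
    exact hsep.squarefree
  · have hsep : Separable (((X : ℂ[X]) - 1) * (X + 1) * (2 * X - 1) * (2 * X + 1)) := by
      refine ⟨C 1 - C (40/9) * X ^ 2, C (10/9) * X ^ 3 - C (17/18) * X, ?_⟩
      rw [deriv_q]
      apply Polynomial.funext
      intro r
      simp only [eval_add, eval_mul, eval_sub, eval_neg, eval_ofNat, eval_pow, eval_X,
        eval_C, eval_one]
      ring
    exact hsep.squarefree
  · intro z ⟨h1, h2⟩
    have := congrArg (eval z)
      (show ((4:ℂ[X]) * X ^ 3 - 3 * X) * (X * (4 * X ^ 2 - 3))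
          + (1 - 4 * X ^ 2) * ((X - 1) * (X + 1) * (2 * X - 1) * (2 * X + 1)) = 1 by ring)
    simp only [IsRoot] at h1 h2
    simp [h1, h2] at this
end

section
/- There do not exist polynomials F, G, h ∈ ℂ[X] such that: F is squarefree of degree 4; G is squarefree of degree 6; h is squarefree of degree 3; F and h have no common complex root; and F³ = G² + h². (Equivalently, there is no Belyi covering of degree 12 with branching pattern [3]⁴ above 0, [2]⁶ above 1, and 6+2+2+2 above ∞ — the nonexistent pattern N₄ of the paper.) -/
open Polynomial

lemma coprime_of_no_common_root (F h : ℂ[X]) (hF : F ≠ 0)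
    (H : ∀ z : ℂ, ¬(F.IsRoot z ∧ h.IsRoot z)) : IsCoprime F h := by
  rw [← EuclideanDomain.gcd_isUnit_iff]
  by_contra hu
  have hdvdF := EuclideanDomain.gcd_dvd_left F h
  have hdvdh := EuclideanDomain.gcd_dvd_right F h
  have hg : EuclideanDomain.gcd F h ≠ 0 := by
    intro h0
    rw [h0] at hdvdF
    exact hF (zero_dvd_iff.mp hdvdF)
  have hdeg : 0 < (EuclideanDomain.gcd F h).degree := by
    rcases lt_or_eq_of_le (Polynomial.zero_le_degree_iff.mpr hg) with h1 | h1
    · exact h1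
    · exact absurd (isUnit_iff_degree_eq_zero.mpr h1.symm) hu
  obtain ⟨z, hz⟩ := IsAlgClosed.exists_root (k := ℂ) _ (ne_of_gt hdeg)
  exact H z ⟨hz.dvd hdvdF, hz.dvd hdvdh⟩

/-- Nonexistent branching pattern `N₄`: there is no Belyi covering of degree 12
with branching pattern `[3]⁴ = [2]⁶ = 6+2+2+2`.  Normalized so that the point of
ramification order 6 is at `∞`, such a covering would be `F³/h²` with `F`
squarefree of degree 4, `G` squarefree of degree 6, `h` squarefree of degree 3,
`F` and `h` sharing no complex root, and `F³ = G² + h²`. -/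
theorem no_covering_N4 :
    ¬ ∃ (F G h : ℂ[X]),
      Squarefree F ∧ F.natDegree = 4 ∧
      Squarefree G ∧ G.natDegree = 6 ∧
      Squarefree h ∧ h.natDegree = 3 ∧
      (∀ z : ℂ, ¬(F.IsRoot z ∧ h.IsRoot z)) ∧
      F ^ 3 = G ^ 2 + h ^ 2 := by
  rintro ⟨F, G, h, hFsq, hFdeg, hGsq, hGdeg, hhsq, hhdeg, Hroot, heq⟩
  have hF0 : F ≠ 0 := fun h0 => by simp [h0] at hFdeg
  have hh0 : h ≠ 0 := fun h0 => by simp [h0] at hhdeg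
  have hI2 : (C Complex.I) ^ 2 = (-1 : ℂ[X]) := by
    rw [← C_pow, Complex.I_sq, map_neg, map_one]
  set P : ℂ[X] := G + C Complex.I * h with hPdef
  set Q : ℂ[X] := G - C Complex.I * h with hQdef
  have hPQ : P * Q = F ^ 3 := by
    have e : P * Q = G ^ 2 - (C Complex.I) ^ 2 * h ^ 2 := by rw [hPdef, hQdef]; ring
    rw [e, hI2, heq]; ring
  have hF30 : F ^ 3 ≠ 0 := pow_ne_zero _ hF0
  have hP0 : P ≠ 0 := fun h0 => hF30 (by rw [← hPQ, h0, zero_mul])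
  have hQ0 : Q ≠ 0 := fun h0 => hF30 (by rw [← hPQ, h0, mul_zero])
  -- coprimality of P and Q
  have hcopF : IsCoprime (F ^ 3) h := (coprime_of_no_common_root F h hF0 Hroot).pow_left
  have hPQcop : IsCoprime P Q := by
    rw [← EuclideanDomain.gcd_isUnit_iff]
    set d := EuclideanDomain.gcd P Q with hd
    have hdP : d ∣ P := EuclideanDomain.gcd_dvd_left P Q
    have hdQ : d ∣ Q := EuclideanDomain.gcd_dvd_right P Q
    have hdG : d ∣ G := by
      have h1 : d ∣ P + Q := dvd_add hdP hdQ
      have h2 : P + Q = C 2 * G := by rw [hPdef, hQdef, map_ofNat]; ring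
      rw [h2] at h1
      exact (isUnit_C.mpr (isUnit_iff_ne_zero.mpr two_ne_zero)).dvd_mul_left.mp h1
    have hdh : d ∣ h := by
      have h1 : d ∣ P - Q := dvd_sub hdP hdQ
      have h2 : P - Q = C (2 * Complex.I) * h := by
        rw [hPdef, hQdef, map_mul, map_ofNat]; ring
      rw [h2] at h1
      exact (isUnit_C.mpr (isUnit_iff_ne_zero.mpr (by simp [Complex.I_ne_zero]))).dvd_mul_left.mp h1
    have hdF3 : d ∣ F ^ 3 := by
      rw [heq]
      exact dvd_add (dvd_pow hdG two_ne_zero) (dvd_pow hdh two_ne_zero)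
    exact hcopF.isUnit_of_dvd' hdF3 hdh
  -- degrees of P and Q
  have hCIh : (C Complex.I * h).natDegree = 3 := by
    rw [natDegree_C_mul Complex.I_ne_zero, hhdeg]
  have hPle : P.natDegree ≤ 6 := by
    refine le_trans (natDegree_add_le _ _) ?_
    rw [hGdeg, hCIh]; norm_num
  have hQle : Q.natDegree ≤ 6 := by
    refine le_trans (natDegree_sub_le _ _) ?_
    rw [hGdeg, hCIh]; norm_num
  have hsum : P.natDegree + Q.natDegree = 12 := by
    rw [← natDegree_mul hP0 hQ0, hPQ, natDegree_pow, hFdeg]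
  have hPd : P.natDegree = 6 := by omega
  have hQd : Q.natDegree = 6 := by omega
  -- factorization into cubes
  obtain ⟨A, uA, hA⟩ := exists_associated_pow_of_mul_eq_pow' hPQcop hPQ
  obtain ⟨B, uB, hB⟩ := exists_associated_pow_of_mul_eq_pow' hPQcop.symm
    (by rw [mul_comm]; exact hPQ)
  obtain ⟨cu, hcuU, hcu⟩ := Polynomial.isUnit_iff.mp uA.isUnit
  obtain ⟨cv, hcvU, hcv⟩ := Polynomial.isUnit_iff.mp uB.isUnit
  have hA' : A ^ 3 * C cu = P := by rw [hcu]; exact hA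
  have hB' : B ^ 3 * C cv = Q := by rw [hcv]; exact hB
  have hcu0 : cu ≠ 0 := hcuU.ne_zero
  have hcv0 : cv ≠ 0 := hcvU.ne_zero
  have hA0 : A ≠ 0 := by rintro rfl; simp at hA'; exact hP0 hA'.symm
  have hB0 : B ≠ 0 := by rintro rfl; simp at hB'; exact hQ0 hB'.symm
  have hAdeg : A.natDegree = 2 := by
    have : (A ^ 3 * C cu).natDegree = 6 := by rw [hA', hPd]
    rw [natDegree_mul_C hcu0, natDegree_pow] at this
    omega
  have hBdeg : B.natDegree = 2 := by
    have : (B ^ 3 * C cv).natDegree = 6 := by rw [hB', hQd]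
    rw [natDegree_mul_C hcv0, natDegree_pow] at this
    omega
  -- absorb the constants via cube roots
  obtain ⟨α, hα⟩ := IsAlgClosed.exists_pow_nat_eq cu (n := 3) (by norm_num)
  obtain ⟨β, hβ⟩ := IsAlgClosed.exists_pow_nat_eq cv (n := 3) (by norm_num)
  have hα0 : α ≠ 0 := fun h0 => hcu0 (by rw [← hα, h0]; ring)
  have hβ0 : β ≠ 0 := fun h0 => hcv0 (by rw [← hβ, h0]; ring)
  set A' : ℂ[X] := C α * A with hA'def
  set B' : ℂ[X] := C β * B with hB'def
  have hA'3 : A' ^ 3 = A ^ 3 * C cu := by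
    rw [hA'def, mul_pow, ← C_pow, hα]; ring
  have hB'3 : B' ^ 3 = B ^ 3 * C cv := by
    rw [hB'def, mul_pow, ← C_pow, hβ]; ring
  have hA'0 : A' ≠ 0 := mul_ne_zero (by simpa using hα0) hA0
  have hB'0 : B' ≠ 0 := mul_ne_zero (by simpa using hβ0) hB0
  have hA'deg : A'.natDegree = 2 := by rw [hA'def, natDegree_C_mul hα0, hAdeg]
  have hB'deg : B'.natDegree = 2 := by rw [hB'def, natDegree_C_mul hβ0, hBdeg]
  have hmain : A' ^ 3 - B' ^ 3 = C (2 * Complex.I) * h := by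
    rw [hA'3, hB'3, hA', hB', hPdef, hQdef, map_mul, map_ofNat]; ring
  have h2I0 : (2 : ℂ) * Complex.I ≠ 0 := by simp [Complex.I_ne_zero]
  have hrhs0 : C (2 * Complex.I) * h ≠ 0 :=
    mul_ne_zero (by rwa [ne_eq, C_eq_zero]) hh0
  have hrhsdeg : (C (2 * Complex.I) * h).natDegree = 3 := by
    rw [natDegree_C_mul h2I0, hhdeg]
  -- equal cubes of leading coefficients
  set p := A'.leadingCoeff with hp
  set q := B'.leadingCoeff with hq
  have hp0 : p ≠ 0 := leadingCoeff_ne_zero.mpr hA'0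
  have hq0 : q ≠ 0 := leadingCoeff_ne_zero.mpr hB'0
  have hA'3deg : (A' ^ 3).natDegree = 6 := by rw [natDegree_pow, hA'deg]
  have hB'3deg : (B' ^ 3).natDegree = 6 := by rw [natDegree_pow, hB'deg]
  have hcube : p ^ 3 = q ^ 3 := by
    have h6 : (A' ^ 3 - B' ^ 3).coeff 6 = 0 := by
      rw [hmain]
      exact coeff_eq_zero_of_natDegree_lt (by rw [hrhsdeg]; norm_num)
    have e1 : (A' ^ 3).coeff 6 = p ^ 3 := by
      rw [← hA'3deg, coeff_natDegree, leadingCoeff_pow]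
    have e2 : (B' ^ 3).coeff 6 = q ^ 3 := by
      rw [← hB'3deg, coeff_natDegree, leadingCoeff_pow]
    rw [coeff_sub, e1, e2] at h6
    linear_combination h6
  -- normalize B' to have the same leading coefficient
  set B'' : ℂ[X] := C (p / q) * B' with hB''def
  have hpq0 : p / q ≠ 0 := div_ne_zero hp0 hq0
  have hpq3 : (p / q) ^ 3 = 1 := by
    rw [div_pow, hcube, div_self (pow_ne_zero _ hq0)]
  have hB''3 : B'' ^ 3 = B' ^ 3 := by
    rw [hB''def, mul_pow, ← C_pow, hpq3, map_one, one_mul]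
  have hB''0 : B'' ≠ 0 := mul_ne_zero (by simpa using hpq0) hB'0
  have hB''deg : B''.natDegree = 2 := by rw [hB''def, natDegree_C_mul hpq0, hB'deg]
  have hB''lead : B''.leadingCoeff = p := by
    rw [hB''def, leadingCoeff_mul, leadingCoeff_C, ← hq, div_mul_cancel₀ _ hq0]
  -- the difference has small degree
  set C0 : ℂ[X] := A' - B'' with hC0def
  set D : ℂ[X] := A' ^ 2 + A' * B'' + B'' ^ 2 with hDdef
  have hfact : C0 * D = C (2 * Complex.I) * h := by
    rw [hC0def, hDdef, ← hmain, ← hB''3]; ring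
  have hC00 : C0 ≠ 0 := fun h0 => hrhs0 (by rw [← hfact, h0, zero_mul])
  have hD0 : D ≠ 0 := fun h0 => hrhs0 (by rw [← hfact, h0, mul_zero])
  have hC0deg : C0.natDegree < 2 := by
    rw [natDegree_lt_iff_degree_lt hC00]
    have hdegs : A'.degree = B''.degree := by
      rw [degree_eq_natDegree hA'0, degree_eq_natDegree hB''0, hA'deg, hB''deg]
    have := degree_sub_lt hdegs hA'0 (by rw [← hp, hB''lead])
    rwa [← hC0def, degree_eq_natDegree hA'0, hA'deg] at this
  have hDdeg : D.natDegree = 4 := by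
    have hle : D.natDegree ≤ 4 := by
      refine le_trans (natDegree_add_le _ _) ?_
      have h1 : (A' ^ 2).natDegree = 4 := by rw [natDegree_pow, hA'deg]
      have h2 : (B'' ^ 2).natDegree = 4 := by rw [natDegree_pow, hB''deg]
      have h3 : (A' * B'').natDegree = 4 := by rw [natDegree_mul hA'0 hB''0, hA'deg, hB''deg]
      refine max_le (le_trans (natDegree_add_le _ _) ?_) (by rw [h2])
      exact max_le (by rw [h1]) (by rw [h3])
    have hcoeff : D.coeff 4 = 3 * p ^ 2 := by
      have e1 : (A' ^ 2).coeff 4 = p ^ 2 := by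
        have : (A' ^ 2).natDegree = 4 := by rw [natDegree_pow, hA'deg]
        rw [← this, coeff_natDegree, leadingCoeff_pow]
      have e2 : (B'' ^ 2).coeff 4 = p ^ 2 := by
        have : (B'' ^ 2).natDegree = 4 := by rw [natDegree_pow, hB''deg]
        rw [← this, coeff_natDegree, leadingCoeff_pow, hB''lead]
      have e3 : (A' * B'').coeff 4 = p * p := by
        have := coeff_mul_degree_add_degree A' B''
        rw [hA'deg, hB''deg, hB''lead, ← hp] at this
        exact this
      rw [hDdef, coeff_add, coeff_add, e1, e2, e3]; ring
    have hne : D.coeff 4 ≠ 0 := by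
      rw [hcoeff]
      exact mul_ne_zero three_ne_zero (pow_ne_zero _ hp0)
    exact le_antisymm hle (le_natDegree_of_ne_zero hne)
  have hfinal : C0.natDegree + D.natDegree = 3 := by
    rw [← natDegree_mul hC00 hD0, hfact, hrhsdeg]
  omega
end

section
/- There do not exist polynomials A, B, h ∈ ℂ[X] such that: A is squarefree of degree 4; B is squarefree of degree 3; h is squarefree of degree 3; A and h have no common complex root; and A² = B³ + h³. (Equivalently, there is no Belyi covering of degree 9 with branching pattern 2+2+2+2+1 above 0, [3]³ above 1, and 3+3+3 above ∞ — the nonexistent pattern N₁₆ of the paper.) -/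
open Polynomial

lemma even_natDegree_of_even_rootMultiplicity (p : ℂ[X]) (hp : p ≠ 0)
    (h : ∀ z : ℂ, Even (rootMultiplicity z p)) : Even p.natDegree := by
  have h1 : p.natDegree = Multiset.card p.roots := by
    simpa using Polynomial.Splits.natDegree_eq_card_roots
      (IsAlgClosed.splits p)
  rw [h1, ← Multiset.toFinset_sum_count_eq]
  refine Finset.even_sum _ fun z _ => ?_
  rw [Polynomial.count_roots]
  exact h z

/-- Nonexistent branching pattern `N₁₆`: there is no Belyi covering of degree 9
with branching pattern `2+2+2+2+1 = [3]³ = 3+3+3`.  Normalized so that the simple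
point of the first fiber is at `∞`, such a covering would be `A²/h³` with `A`
squarefree of degree 4, `B` squarefree of degree 3, `h` squarefree of degree 3,
`A` and `h` sharing no complex root, and `A² = B³ + h³`. -/
theorem no_covering_N16 :
    ¬ ∃ (A B h : ℂ[X]),
      Squarefree A ∧ A.natDegree = 4 ∧
      Squarefree B ∧ B.natDegree = 3 ∧
      Squarefree h ∧ h.natDegree = 3 ∧
      (∀ z : ℂ, ¬(A.IsRoot z ∧ h.IsRoot z)) ∧
      A ^ 2 = B ^ 3 + h ^ 3 := by
  rintro ⟨A, B, h, -, hA4, -, hB3, -, hh3, hcop, heq⟩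
  have hA0 : A ≠ 0 := fun e => by simp [e] at hA4
  -- get a primitive cube root of unity
  obtain ⟨ω, hω⟩ : ∃ ω : ℂ, ω ^ 2 + ω + 1 = 0 := by
    obtain ⟨z, hz⟩ := Complex.exists_root (f := X ^ 2 + X + 1) (by
      have hd : (X ^ 2 + X + 1 : ℂ[X]).degree = 2 := by compute_degree!
      rw [hd]; norm_num)
    exact ⟨z, by simpa [Polynomial.IsRoot] using hz⟩
  have hω1 : (1 : ℂ) ≠ ω := by
    rintro rfl; norm_num at hω
  have hω21 : (1 : ℂ) ≠ ω ^ 2 := by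
    intro he
    have h3 : (3 : ℂ) = 0 := by linear_combination (2 - ω) * hω - (ω - 1) * he
    norm_num at h3
  have hωω2 : ω ≠ ω ^ 2 := by
    intro he
    have h3 : (3 : ℂ) = 0 := by linear_combination (3 - 2 * ω) * hω - (2 * ω + 1) * he
    norm_num at h3
  -- common roots of two factors are impossible
  have hpair : ∀ c d : ℂ, c ≠ d → ∀ z : ℂ,
      (B + C c * h).IsRoot z → (B + C d * h).IsRoot z → False := by
    intro c d hcd z h1 h2
    have e1 : B.eval z + c * h.eval z = 0 := by simpa using h1
    have e2 : B.eval z + d * h.eval z = 0 := by simpa using h2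
    have hhz : h.eval z = 0 := by
      have hcd' : (c - d) * h.eval z = 0 := by linear_combination e1 - e2
      rcases mul_eq_zero.1 hcd' with h' | h'
      · exact absurd (sub_eq_zero.1 h') hcd
      · exact h'
    have hBz : B.eval z = 0 := by linear_combination e1 - c * hhz
    have hAz : A.eval z = 0 := by
      have := congrArg (eval z) heq
      simp only [eval_pow, eval_add, hBz, hhz] at this
      simpa [pow_eq_zero_iff] using this
    exact hcop z ⟨hAz, hhz⟩
  -- the factorization A² = (B + h)(B + ωh)(B + ω²h)
  have hC : (C ω) ^ 2 + C ω + 1 = (0 : ℂ[X]) := by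
    have := congrArg (C : ℂ → ℂ[X]) hω
    simpa using this
  have hfac : A ^ 2 = (B + C 1 * h) * ((B + C ω * h) * (B + C (ω ^ 2) * h)) := by
    rw [heq, map_one, one_mul, map_pow]
    linear_combination (-(B ^ 2 * h) - C ω * B * h ^ 2 - (C ω - 1) * h ^ 3) * hC
  -- each factor has all root multiplicities even
  have hEvenRM : ∀ c d e : ℂ, c ≠ d → c ≠ e →
      A ^ 2 = (B + C c * h) * ((B + C d * h) * (B + C e * h)) →
      ∀ z : ℂ, Even (rootMultiplicity z (B + C c * h)) := by
    intro c d e hcd hce hprod z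
    by_cases hz : (B + C c * h).IsRoot z
    · have hd0 : rootMultiplicity z (B + C d * h) = 0 :=
        rootMultiplicity_eq_zero fun hr => (hpair c d hcd z hz hr).elim
      have he0 : rootMultiplicity z (B + C e * h) = 0 :=
        rootMultiplicity_eq_zero fun hr => (hpair c e hce z hz hr).elim
      have hne : (B + C c * h) * ((B + C d * h) * (B + C e * h)) ≠ 0 := by
        rw [← hprod]; exact pow_ne_zero 2 hA0
      have hne2 : (B + C d * h) * (B + C e * h) ≠ 0 := right_ne_zero_of_mul hne
      have h1 : rootMultiplicity z (A ^ 2) = rootMultiplicity z (B + C c * h) := by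
        rw [hprod, rootMultiplicity_mul hne, rootMultiplicity_mul hne2, hd0, he0]
        omega
      have h2 : rootMultiplicity z (A ^ 2) =
          rootMultiplicity z A + rootMultiplicity z A := by
        rw [pow_two, rootMultiplicity_mul (mul_ne_zero hA0 hA0)]
      rw [← h1, h2]
      exact Even.add_self _
    · rw [rootMultiplicity_eq_zero hz]
      exact Even.zero
  -- nonvanishing of the factors
  have hprodne : (B + C 1 * h) * ((B + C ω * h) * (B + C (ω ^ 2) * h)) ≠ 0 := by
    rw [← hfac]; exact pow_ne_zero 2 hA0
  have hF0 : B + C 1 * h ≠ 0 := left_ne_zero_of_mul hprodne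
  have hF1 : B + C ω * h ≠ 0 := left_ne_zero_of_mul (right_ne_zero_of_mul hprodne)
  have hF2 : B + C (ω ^ 2) * h ≠ 0 := right_ne_zero_of_mul (right_ne_zero_of_mul hprodne)
  -- degrees sum to 8
  have hdeg : (B + C 1 * h).natDegree +
      ((B + C ω * h).natDegree + (B + C (ω ^ 2) * h).natDegree) = 8 := by
    have h8 : (A ^ 2).natDegree = 8 := by rw [natDegree_pow, hA4]
    rw [hfac, natDegree_mul hF0 (mul_ne_zero hF1 hF2), natDegree_mul hF1 hF2] at h8
    exact h8
  -- each degree is at most 3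
  have hle : ∀ c : ℂ, (B + C c * h).natDegree ≤ 3 := by
    intro c
    refine (natDegree_add_le _ _).trans ?_
    have := (natDegree_C_mul_le c h).trans hh3.le
    omega
  -- each degree is even
  have hEv0 : Even (B + C 1 * h).natDegree :=
    even_natDegree_of_even_rootMultiplicity _ hF0
      (hEvenRM 1 ω (ω ^ 2) hω1 hω21 hfac)
  have hEv1 : Even (B + C ω * h).natDegree :=
    even_natDegree_of_even_rootMultiplicity _ hF1
      (hEvenRM ω 1 (ω ^ 2) hω1.symm hωω2 (by rw [hfac]; ring))
  have hEv2 : Even (B + C (ω ^ 2) * h).natDegree :=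
    even_natDegree_of_even_rootMultiplicity _ hF2
      (hEvenRM (ω ^ 2) 1 ω hω21.symm hωω2.symm (by rw [hfac]; ring))
  rw [Nat.even_iff] at hEv0 hEv1 hEv2
  have := hle 1
  have := hle ω
  have := hle (ω ^ 2)
  omega
end

section
/- There do not exist polynomials u, G ∈ ℂ[X], complex numbers a, b, d, and a nonzero complex number λ such that: u is squarefree of degree 2; G is squarefree of degree 4; a, b, d are pairwise distinct; u(a) ≠ 0, u(b) ≠ 0, u(d) ≠ 0; and u⁴ − λ·(X − a)(X − b)(X − d) = G². (Equivalently, there is no Belyi covering of degree 8 with branching pattern [4]² above 0, [2]⁴ above 1, and 5+1+1+1 above ∞ — the nonexistent pattern N₂₁ of the paper.) -/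
open Polynomial

/-- Nonexistent branching pattern `N₂₁`: there is no Belyi covering of degree 8
with branching pattern `[4]² = [2]⁴ = 5+1+1+1`.  Normalized so that the point of
ramification order 5 is at `∞`, such a covering would be
`λ⁻¹·u⁴/((X−a)(X−b)(X−d))` with `u` squarefree of degree 2, `G` squarefree of
degree 4, and `a, b, d` distinct points not roots of `u`. -/
theorem no_covering_N21 :
    ¬ ∃ (u G : ℂ[X]) (a b d l : ℂ), l ≠ 0 ∧
      Squarefree u ∧ u.natDegree = 2 ∧
      Squarefree G ∧ G.natDegree = 4 ∧
      a ≠ b ∧ a ≠ d ∧ b ≠ d ∧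
      u.eval a ≠ 0 ∧ u.eval b ≠ 0 ∧ u.eval d ≠ 0 ∧
      u ^ 4 - C l * ((X - C a) * (X - C b) * (X - C d)) = G ^ 2 := by
  rintro ⟨u, G, a, b, d, l, hl, hu, hud, hG, hGd, -, -, -, -, -, -, heq⟩
  -- Cubic polynomial
  set P : ℂ[X] := (X - C a) * (X - C b) * (X - C d) with hP
  have hPmonic : P.Monic := by
    exact ((monic_X_sub_C a).mul (monic_X_sub_C b)).mul (monic_X_sub_C d)
  have hPdeg : P.natDegree = 3 := by
    rw [hP, natDegree_mul (mul_ne_zero (X_sub_C_ne_zero a) (X_sub_C_ne_zero b))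
      (X_sub_C_ne_zero d), natDegree_mul (X_sub_C_ne_zero a) (X_sub_C_ne_zero b)]
    simp [natDegree_X_sub_C]
  have hfac : (u ^ 2 - G) * (u ^ 2 + G) = C l * P := by
    have : u ^ 4 - G ^ 2 = C l * P := by rw [← heq]; ring
    rw [← this]; ring
  have hQ0 : C l * P ≠ 0 := mul_ne_zero (by simpa using hl) hPmonic.ne_zero
  have hQdeg : (C l * P).natDegree = 3 := by
    rw [natDegree_C_mul hl, hPdeg]
  have h1 : u ^ 2 - G ≠ 0 := fun h => hQ0 (by rw [← hfac, h, zero_mul])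
  have h2 : u ^ 2 + G ≠ 0 := fun h => hQ0 (by rw [← hfac, h, mul_zero])
  have hsum : (u ^ 2 - G).natDegree + (u ^ 2 + G).natDegree = 3 := by
    rw [← natDegree_mul h1 h2, hfac, hQdeg]
  have hle1 : (u ^ 2 - G).natDegree ≤ 3 := by omega
  have hle2 : (u ^ 2 + G).natDegree ≤ 3 := by omega
  have h2u : ((u ^ 2 - G) + (u ^ 2 + G)).natDegree = 4 := by
    have : (u ^ 2 - G) + (u ^ 2 + G) = C 2 * u ^ 2 := by
      rw [map_ofNat]; ring
    rw [this, natDegree_C_mul (two_ne_zero), natDegree_pow, hud]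
  have := natDegree_add_le (u ^ 2 - G) (u ^ 2 + G)
  omega
end

section
/- There do not exist polynomials u, v ∈ ℂ[X], complex numbers a, b, d, and a nonzero complex number λ such that: u and v are squarefree of degree 2; a, b, d are pairwise distinct; u(a) ≠ 0, u(b) ≠ 0, u(d) ≠ 0; and u³ − λ·(X − a)(X − b)(X − d) = v³. (Equivalently, there is no Belyi covering of degree 6 with branching pattern [3]² above 0, [3]² above 1, and 3+1+1+1 above ∞ — the nonexistent pattern N₂₆ of the paper.) -/
open Polynomial

/-- Nonexistent branching pattern `N₂₆`: there is no Belyi covering of degree 6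
with branching pattern `[3]² = [3]² = 3+1+1+1`.  Normalized so that the point of
ramification order 3 of the last fiber is at `∞`, such a covering would be
`λ⁻¹·u³/((X−a)(X−b)(X−d))` with `u, v` squarefree of degree 2 and `a, b, d`
distinct points not roots of `u`. -/
theorem no_covering_N26 :
    ¬ ∃ (u v : ℂ[X]) (a b d l : ℂ), l ≠ 0 ∧
      Squarefree u ∧ u.natDegree = 2 ∧
      Squarefree v ∧ v.natDegree = 2 ∧
      a ≠ b ∧ a ≠ d ∧ b ≠ d ∧
      u.eval a ≠ 0 ∧ u.eval b ≠ 0 ∧ u.eval d ≠ 0 ∧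
      u ^ 3 - C l * ((X - C a) * (X - C b) * (X - C d)) = v ^ 3 := by
  rintro ⟨u, v, a, b, d, l, hl, hu, hud, hv, hvd, hab, had, hbd, _, _, _, heq⟩
  -- get a primitive cube root of unity
  obtain ⟨ω, hω0⟩ := Complex.exists_root (f := X ^ 2 + X + 1)
    (by
      have h2 : (X ^ 2 + X + 1 : ℂ[X]).degree = 2 := by compute_degree!
      rw [h2]; norm_num)
  have hω : ω ^ 2 + ω + 1 = 0 := by simpa using hω0
  have hω1 : ω ≠ 1 := by rintro rfl; norm_num at hω
  have hωne0 : ω ≠ 0 := by rintro rfl; norm_num at hω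
  have h1ω2 : ω ^ 2 ≠ 1 := by
    intro h
    have hm : ω = -2 := by linear_combination hω - h
    rw [hm] at h; norm_num at h
  have hωω2 : ω ≠ ω ^ 2 := by
    intro h
    have : ω * (ω - 1) = 0 := by linear_combination -h
    rcases mul_eq_zero.mp this with h' | h'
    · exact hωne0 h'
    · exact hω1 (by linear_combination h')
  -- v has nonzero leading coefficient
  have hv0 : v ≠ 0 := fun h => by simp [h] at hvd
  have he : v.coeff 2 ≠ 0 := by
    have h1 : v.leadingCoeff ≠ 0 := leadingCoeff_ne_zero.mpr hv0
    have h2 : v.coeff 2 = v.leadingCoeff := by rw [← hvd]; rfl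
    rw [h2]; exact h1
  -- at most one of the three leading coefficients of the factors can vanish
  have hpair : ∀ s t : ℂ, s ≠ t → u.coeff 2 - s * v.coeff 2 = 0 →
      u.coeff 2 - t * v.coeff 2 ≠ 0 := by
    intro s t hst h1 h2
    have hs : (t - s) * v.coeff 2 = 0 := by linear_combination h1 - h2
    rcases mul_eq_zero.mp hs with h | h
    · exact hst (sub_eq_zero.mp h).symm
    · exact he h
  have hdeg : ∀ t : ℂ, u.coeff 2 - t * v.coeff 2 ≠ 0 →
      2 ≤ (u - C t * v).natDegree := by
    intro t ht
    apply le_natDegree_of_ne_zero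
    simpa [coeff_sub, coeff_C_mul] using ht
  -- cube root of unity relations inside ℂ[X]
  have hw1 : (C ω : ℂ[X]) ^ 2 + C ω + 1 = 0 := by
    have := congrArg C hω
    simpa using this
  have hw3 : (C ω : ℂ[X]) ^ 3 = 1 := by linear_combination (C ω - 1) * hw1
  -- factorization of u³ - v³
  have keyP : (u - v) * (u - C ω * v) * (u - C ω ^ 2 * v)
      = C l * ((X - C a) * (X - C b) * (X - C d)) := by
    linear_combination heq + (C ω * u * v ^ 2 - u ^ 2 * v) * hw1 - v ^ 3 * hw3
  -- the right-hand side is nonzero of degree 3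
  have hgne : ((X - C a) * (X - C b) * (X - C d) : ℂ[X]) ≠ 0 :=
    mul_ne_zero (mul_ne_zero (X_sub_C_ne_zero a) (X_sub_C_ne_zero b)) (X_sub_C_ne_zero d)
  have hg : ((X - C a) * (X - C b) * (X - C d) : ℂ[X]).natDegree = 3 := by
    rw [natDegree_mul (mul_ne_zero (X_sub_C_ne_zero a) (X_sub_C_ne_zero b)) (X_sub_C_ne_zero d),
      natDegree_mul (X_sub_C_ne_zero a) (X_sub_C_ne_zero b)]
    simp
  have hRne : C l * ((X - C a) * (X - C b) * (X - C d) : ℂ[X]) ≠ 0 :=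
    mul_ne_zero (by simpa using hl) hgne
  have hPne : (u - v) * (u - C ω * v) * (u - C ω ^ 2 * v) ≠ 0 := by
    rw [keyP]; exact hRne
  have hf2 : (u - C ω ^ 2 * v) ≠ 0 := right_ne_zero_of_mul hPne
  have hf01 : (u - v) * (u - C ω * v) ≠ 0 := left_ne_zero_of_mul hPne
  have hf0 : (u - v) ≠ 0 := left_ne_zero_of_mul hf01
  have hf1 : (u - C ω * v) ≠ 0 := right_ne_zero_of_mul hf01
  have hsum : (u - v).natDegree + (u - C ω * v).natDegree
      + (u - C ω ^ 2 * v).natDegree = 3 := by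
    have h1 : ((u - v) * (u - C ω * v) * (u - C ω ^ 2 * v)).natDegree = 3 := by
      rw [keyP, natDegree_C_mul hl, hg]
    rwa [natDegree_mul hf01 hf2, natDegree_mul hf0 hf1] at h1
  -- at least two of the factors have degree 2, so the sum is ≥ 4 : contradiction
  by_cases hA : u.coeff 2 - 1 * v.coeff 2 = 0
  · have hB := hpair 1 ω (fun h => hω1 h.symm) hA
    have hC := hpair 1 (ω ^ 2) (fun h => h1ω2 h.symm) hA
    have hB2 := hdeg ω hB
    have hC2 := hdeg (ω ^ 2) hC
    rw [map_pow] at hC2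
    omega
  · by_cases hB : u.coeff 2 - ω * v.coeff 2 = 0
    · have hC := hpair ω (ω ^ 2) hωω2 hB
      have hA2 : 2 ≤ (u - v).natDegree := by simpa using hdeg 1 hA
      have hC2 := hdeg (ω ^ 2) hC
      rw [map_pow] at hC2
      omega
    · have hA2 : 2 ≤ (u - v).natDegree := by simpa using hdeg 1 hA
      have hB2 := hdeg ω hB
      omega
end

section
/- There do not exist a polynomial u ∈ ℂ[X], complex numbers e, r, s, and nonzero complex numbers λ, μ such that: u is squarefree of degree 2; u(e) ≠ 0; r ≠ s; and u² − μ·(X − e)² = λ·(X − r)³(X − s). (Equivalently, there is no Belyi covering of degree 4 with branching pattern 2+2 above 0, 3+1 above 1, and 2+2 above ∞ — the nonexistent pattern N₂₇ of the paper.) -/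
open Polynomial

lemma aux_deg_contra (P : ℂ[X]) (r : ℂ) (hP : P ≠ 0) (hd : P.natDegree ≤ 2)
    (hdvd : (X - C r) ^ 3 ∣ P) : False := by
  have h := Polynomial.natDegree_le_of_dvd hdvd hP
  simp [Polynomial.natDegree_pow, Polynomial.natDegree_X_sub_C] at h
  omega

/-- Nonexistent branching pattern `N₂₇` (the only unrealizable pattern of
Table 1): there is no Belyi covering of degree 4 with branching pattern
`2+2 = 3+1 = 2+2`.  Normalized so that one point of ramification order 2 of the
fiber above `∞` is at `x = ∞`, such a covering would be `u²/(μ(X−e)²)` with `u`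
squarefree of degree 2, `u(e) ≠ 0`, `r ≠ s`, and
`u² − μ(X−e)² = λ(X−r)³(X−s)`. -/
theorem no_covering_N27 :
    ¬ ∃ (u : ℂ[X]) (e r s l m : ℂ), l ≠ 0 ∧ m ≠ 0 ∧
      Squarefree u ∧ u.natDegree = 2 ∧
      u.eval e ≠ 0 ∧ r ≠ s ∧
      u ^ 2 - C m * (X - C e) ^ 2 = C l * ((X - C r) ^ 3 * (X - C s)) := by
  rintro ⟨u, e, r, s, l, m, hl, hm, hsf, hdeg, hue, hrs, heq⟩
  obtain ⟨t, ht⟩ := IsAlgClosed.exists_pow_nat_eq (k := ℂ) m two_pos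
  have ht0 : t ≠ 0 := by rintro rfl; simp at ht; exact hm ht.symm
  set A : ℂ[X] := u - C t * (X - C e) with hA
  set B : ℂ[X] := u + C t * (X - C e) with hB
  have hABmul : A * B = C l * ((X - C r) ^ 3 * (X - C s)) := by
    rw [hA, hB, ← heq]
    have : (C m : ℂ[X]) = C t ^ 2 := by rw [← C_pow, ht]
    rw [this]; ring
  -- A and B are nonzero
  have hRHS : C l * ((X - C r) ^ 3 * (X - C s)) ≠ 0 := by
    refine mul_ne_zero (by simpa using hl) (mul_ne_zero (pow_ne_zero _ (X_sub_C_ne_zero r)) (X_sub_C_ne_zero s))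
  have hABne : A * B ≠ 0 := by rw [hABmul]; exact hRHS
  have hAne : A ≠ 0 := fun h => hABne (by rw [h, zero_mul])
  have hBne : B ≠ 0 := fun h => hABne (by rw [h, mul_zero])
  -- degrees ≤ 2
  have hlin : (C t * (X - C e) : ℂ[X]).natDegree ≤ 2 := by
    rw [natDegree_C_mul ht0, natDegree_X_sub_C]; norm_num
  have hdA : A.natDegree ≤ 2 := by
    rw [hA]; exact (natDegree_sub_le _ _).trans (by simp [hdeg, hlin])
  have hdB : B.natDegree ≤ 2 := by
    rw [hB]; exact (natDegree_add_le _ _).trans (by simp [hdeg, hlin])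
  -- (X - C r) doesn't divide both
  have hp : Prime (X - C r : ℂ[X]) := prime_X_sub_C r
  have hnotboth : ¬ ((X - C r : ℂ[X]) ∣ A ∧ (X - C r : ℂ[X]) ∣ B) := by
    rintro ⟨h1, h2⟩
    have e1 : A.eval r = 0 := (dvd_iff_isRoot.mp h1)
    have e2 : B.eval r = 0 := (dvd_iff_isRoot.mp h2)
    rw [hA] at e1; rw [hB] at e2
    simp only [eval_sub, eval_add, eval_mul, eval_C, eval_X] at e1 e2
    have hur : u.eval r = 0 := by linear_combination (e1 + e2) / 2
    have hre : t * (r - e) = 0 := by linear_combination (e2 - e1) / 2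
    have : r = e := by
      rcases mul_eq_zero.mp hre with h | h
      · exact absurd h ht0
      · exact sub_eq_zero.mp h
    exact hue (this ▸ hur)
  -- (X - C r)^3 divides A*B
  have hcube : (X - C r : ℂ[X]) ^ 3 ∣ A * B := by
    rw [hABmul]; exact ⟨C l * (X - C s), by ring⟩
  have hd1 : (X - C r : ℂ[X]) ∣ A ∨ (X - C r : ℂ[X]) ∣ B :=
    hp.dvd_mul.mp (dvd_trans (dvd_pow_self _ (by norm_num)) hcube)
  rcases hd1 with h | h
  · have hnB : ¬ (X - C r : ℂ[X]) ∣ B := fun hb => hnotboth ⟨h, hb⟩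
    exact aux_deg_contra A r hAne hdA (hp.pow_dvd_of_dvd_mul_right 3 hnB hcube)
  · have hnA : ¬ (X - C r : ℂ[X]) ∣ A := fun ha => hnotboth ⟨ha, h⟩
    have hcube' : (X - C r : ℂ[X]) ^ 3 ∣ B * A := by rwa [mul_comm] at hcube
    exact aux_deg_contra B r hBne hdB (hp.pow_dvd_of_dvd_mul_right 3 hnA hcube')
end

section
/- There do not exist a polynomial G ∈ ℂ[X], complex numbers p, q, a, b, and a nonzero complex number λ such that: G is squarefree of degree 3; p ≠ q; a ≠ b; p ∉ {a, b} and q ∉ {a, b}; and λ·(X − p)⁴(X − q)² − (X − a)(X − b) = G². (Equivalently, there is no Belyi covering of degree 6 with branching pattern 4+2 above 0, [2]³ above 1, and 4+1+1 above ∞ — the nonexistent pattern N₂₃ of the paper.) -/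
open Polynomial

/-- Nonexistent branching pattern `N₂₃`: there is no Belyi covering of degree 6
with branching pattern `4+2 = [2]³ = 4+1+1`.  Normalized so that the point of
ramification order 4 of the fiber `4+1+1` is at `∞`, such a covering would be
`λ(X−p)⁴(X−q)²/((X−a)(X−b))` with `G` squarefree of degree 3, `p ≠ q`, `a ≠ b`,
and `p, q ∉ {a, b}`. -/
theorem no_covering_N23 :
    ¬ ∃ (G : ℂ[X]) (p q a b l : ℂ), l ≠ 0 ∧
      Squarefree G ∧ G.natDegree = 3 ∧
      p ≠ q ∧ a ≠ b ∧
      p ≠ a ∧ p ≠ b ∧ q ≠ a ∧ q ≠ b ∧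
      C l * ((X - C p) ^ 4 * (X - C q) ^ 2) - (X - C a) * (X - C b) = G ^ 2 := by
  rintro ⟨G, p, q, a, b, l, hl, -, -, -, -, -, -, -, -, heq⟩
  obtain ⟨μ, hμ⟩ := IsAlgClosed.exists_pow_nat_eq l zero_lt_two
  have hμ0 : μ ≠ 0 := by rintro rfl; simp at hμ; exact hl hμ.symm
  set F : ℂ[X] := (X - C p) ^ 2 * (X - C q) with hF
  have hFm : F.Monic := ((monic_X_sub_C p).pow 2).mul (monic_X_sub_C q)
  have hFdeg : F.natDegree = 3 := by
    rw [hF, natDegree_mul ((monic_X_sub_C p).pow 2).ne_zero (X_sub_C_ne_zero q),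
      natDegree_pow, natDegree_X_sub_C, natDegree_X_sub_C]
  set A : ℂ[X] := C μ * F - G with hA
  set B : ℂ[X] := C μ * F + G with hB
  have hH : A * B = (X - C a) * (X - C b) := by
    have : A * B = C l * ((X - C p) ^ 4 * (X - C q) ^ 2) - G ^ 2 := by
      rw [hA, hB, hF, ← hμ, map_pow]; ring
    rw [this, ← heq]; ring
  have hHne : (X - C a) * (X - C b) ≠ 0 :=
    ((monic_X_sub_C a).mul (monic_X_sub_C b)).ne_zero
  have hAne : A ≠ 0 := fun h => hHne (by rw [← hH, h, zero_mul])
  have hBne : B ≠ 0 := fun h => hHne (by rw [← hH, h, mul_zero])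
  have hdegsum : A.natDegree + B.natDegree = 2 := by
    have := natDegree_mul hAne hBne
    rw [hH] at this
    rw [← this, natDegree_mul (X_sub_C_ne_zero a) (X_sub_C_ne_zero b),
      natDegree_X_sub_C, natDegree_X_sub_C]
  have hsum : A + B = C (2 * μ) * F := by simp only [hA, hB, map_mul, map_ofNat]; ring
  have hsumdeg : (A + B).natDegree = 3 := by
    rw [hsum, natDegree_C_mul (by simpa using hμ0), hFdeg]
  have hle : (A + B).natDegree ≤ 2 := by
    refine le_trans (natDegree_add_le A B) ?_
    omega
  omega
end
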